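/- Let X be an absorbed Markov process admitting a quasi-stationary distribution α with absorption parameter λ₀, eigenfunction η (∫η dα = 1), and constants C, γ > 0 such that ‖ℙ_μ(X_t∈·|t<τ_∂) - α‖_TV ≤ Ce^{-γt} for all initial μ and |e^{λ₀t}ℙ_x(t<τ_∂) - η(x)| ≤ Ce^{-γt}. Then for all measurable A, B ⊆ E with α(B) > 0 and all t ≥ 0: |ℙ_{α|B}(X_t ∈ A) - α(A)| ≤ (α(A)/α(B))(1 - e^{-λ₀t} + Ce^{-(λ₀+γ)t}) + Ce^{-(λ₀+γ)t}(‖η‖_∞ + 2α(A) + Ce^{-γt}), where α|B(·) = α(· ∩ B)/α(B). -/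

import Mathlib

open MeasureTheory

/-- for an absorbed Markov process with quasi-stationary distribution
`α`, absorption parameter `λ₀`, eigenfunction `η` (`∫ η dα = 1`), and constants
`C, γ > 0` with `‖ℙ_μ(X_t∈·∣t<τ_∂) - α‖_TV ≤ Ce^{-γt}` for every initial `μ` and
`|e^{λ₀t}ℙ_x(t<τ_∂) - η(x)| ≤ Ce^{-γt}`, one has for all measurable `A, B ⊆ E` with
`α(B) > 0` and all `t ≥ 0`:
`|ℙ_{α|B}(X_t ∈ A) - α(A)| ≤ (α(A)/α(B))(1 - e^{-λ₀t} + Ce^{-(λ₀+γ)t})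
    + Ce^{-(λ₀+γ)t}(‖η‖_∞ + 2α(A) + Ce^{-γt})`. -/
theorem stmt15
    {E : Type*} [MeasurableSpace E]
    (α : Measure E) [IsProbabilityMeasure α]
    -- `Pt t x A = ℙ_x(X_t ∈ A, t < τ_∂)` for `A ⊆ E`; in particular
    -- `Pt t x univ = ℙ_x(t < τ_∂)`
    (Pt : ℝ → E → Set E → ℝ)
    (hPt01 : ∀ t x A, 0 ≤ t → 0 ≤ Pt t x A ∧ Pt t x A ≤ Pt t x Set.univ ∧
      Pt t x Set.univ ≤ 1)
    (η : E → ℝ) (hηpos : ∀ x, 0 < η x)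
    (hηint : Integrable η α) (hηnorm : ∫ x, η x ∂α = 1)
    -- `‖η‖_∞`
    (ηsup : ℝ) (hηsup : IsLUB (Set.range η) ηsup)
    (lam0 C γ : ℝ) (hlam0 : 0 < lam0) (hC : 0 < C) (hγ : 0 < γ)
    -- `α` is the quasi-stationary distribution with absorption parameter `λ₀`
    (hqsdlaw : ∀ (t : ℝ), 0 ≤ t → ∀ A : Set E, MeasurableSet A →
      ∫ x, Pt t x A ∂α = (α A).toReal * Real.exp (-(lam0 * t)))
    -- total variation convergence of conditional laws, uniform in the initial law `μ`
    (hTV : ∀ (μ : Measure E), IsProbabilityMeasure μ → ∀ (t : ℝ), 0 ≤ t →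
      ∀ A : Set E, MeasurableSet A →
      |(∫ x, Pt t x A ∂μ) / (∫ x, Pt t x Set.univ ∂μ) - (α A).toReal|
        ≤ C * Real.exp (-(γ * t)))
    -- the eigenfunction estimate
    (heta : ∀ (t : ℝ), 0 ≤ t → ∀ x : E,
      |Real.exp (lam0 * t) * Pt t x Set.univ - η x| ≤ C * Real.exp (-(γ * t))) :
    ∀ (B : Set E), MeasurableSet B → 0 < (α B).toReal →
    ∀ (A : Set E), MeasurableSet A → ∀ (t : ℝ), 0 ≤ t →
      |(∫ x in B, Pt t x A ∂α) / (α B).toReal - (α A).toReal|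
        ≤ (α A).toReal / (α B).toReal
            * (1 - Real.exp (-(lam0 * t)) + C * Real.exp (-((lam0 + γ) * t)))
          + C * Real.exp (-((lam0 + γ) * t))
            * (ηsup + 2 * (α A).toReal + C * Real.exp (-(γ * t))) := by
  intro B hB hb A hA t ht
  set a : ℝ := (α A).toReal with ha_def
  set b : ℝ := (α B).toReal with hb_def
  set e : ℝ := Real.exp (-(lam0 * t)) with he_def
  set c : ℝ := C * Real.exp (-(γ * t)) with hc_def
  have he : (0:ℝ) < e := Real.exp_pos _
  have hc : (0:ℝ) < c := mul_pos hC (Real.exp_pos _)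
  have ha : (0:ℝ) ≤ a := ENNReal.toReal_nonneg
  have he1 : e ≤ 1 := by
    have h := Real.exp_le_exp.mpr (show -(lam0 * t) ≤ 0 by nlinarith)
    rwa [Real.exp_zero] at h
  -- integrability of the survival probability
  have hfint : Integrable (fun x => Pt t x Set.univ) α := by
    by_contra h
    have hq := hqsdlaw t ht Set.univ MeasurableSet.univ
    rw [integral_undef h] at hq
    simp only [measure_univ, ENNReal.toReal_one, one_mul] at hq
    exact absurd hq.symm (Real.exp_pos _).ne'
  set IA : ℝ := ∫ x in B, Pt t x A ∂α with hIA_def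
  set I : ℝ := ∫ x in B, Pt t x Set.univ ∂α with hI_def
  -- basic facts about α B
  have hBfin : α B ≠ ⊤ := (measure_lt_top α B).ne
  have hBne : α B ≠ 0 := by
    intro h0
    rw [hb_def, h0] at hb
    simp at hb
  -- the conditional probability measure on B
  set μ : Measure E := (α B)⁻¹ • α.restrict B with hμ_def
  have hμprob : IsProbabilityMeasure μ := by
    constructor
    rw [hμ_def, Measure.smul_apply, Measure.restrict_apply MeasurableSet.univ,
      Set.univ_inter, smul_eq_mul]
    exact ENNReal.inv_mul_cancel hBne hBfin
  -- total variation estimate for the conditional measure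
  have h1 : |IA / I - a| ≤ c := by
    have h := hTV μ hμprob t ht A hA
    have hμint : ∀ (f : E → ℝ), (∫ x, f x ∂μ) = b⁻¹ * ∫ x in B, f x ∂α := by
      intro f
      rw [hμ_def, integral_smul_measure, ENNReal.toReal_inv, smul_eq_mul, hb_def]
    rw [hμint, hμint, mul_div_mul_left _ _ (inv_ne_zero hb.ne')] at h
    exact h
  -- the key algebraic identity
  have hkey : IA = (IA / I - a) * I + a * I := by
    rcases eq_or_ne I 0 with hI | hI
    · have h0 : (fun x => Pt t x Set.univ) =ᵐ[α.restrict B] 0 := by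
        refine (integral_eq_zero_iff_of_nonneg (fun x => (hPt01 t x Set.univ ht).1)
          (hfint.restrict (s := B))).mp ?_
        exact hI
      have hA0 : (fun x => Pt t x A) =ᵐ[α.restrict B] 0 := by
        filter_upwards [h0] with x hx
        have h1 := (hPt01 t x A ht).1
        have h2 := (hPt01 t x A ht).2.1
        simp only [Pi.zero_apply] at hx ⊢
        linarith [hx ▸ h2]
      have hIA0 : IA = 0 := by
        rw [hIA_def]
        calc (∫ x in B, Pt t x A ∂α) = ∫ x in B, (0:ℝ) ∂α := integral_congr_ae hA0
        _ = 0 := integral_zero _ _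
      simp [hIA0, hI]
    · rw [sub_mul, div_mul_cancel₀ _ hI]; ring
  -- nonnegativity and upper bounds for I
  have hI0 : (0:ℝ) ≤ I := setIntegral_nonneg hB fun x _ => (hPt01 t x Set.univ ht).1
  have hIb : I ≤ b := by
    have h := integral_mono (hfint.restrict (s := B)) (integrable_const (1:ℝ))
      (fun x => (hPt01 t x Set.univ ht).2.2)
    rw [integral_const, measureReal_restrict_apply_univ, smul_eq_mul, mul_one] at h
    exact h
  -- pointwise bound from the eigenfunction estimate
  have hpw : ∀ x, Pt t x Set.univ ≤ e * (η x + c) := by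
    intro x
    have h := (abs_le.mp (heta t ht x)).2
    have hee : e * Real.exp (lam0 * t) = 1 := by
      rw [he_def, ← Real.exp_add]; simp
    have h2 : Real.exp (lam0 * t) * Pt t x Set.univ ≤ η x + c := by linarith
    calc Pt t x Set.univ
        = e * (Real.exp (lam0 * t) * Pt t x Set.univ) := by
          rw [← mul_assoc, hee, one_mul]
      _ ≤ e * (η x + c) := mul_le_mul_of_nonneg_left h2 he.le
  have hIup : I ≤ e * (ηsup * b + c * b) := by
    have hint2 : Integrable (fun x => e * (η x + c)) (α.restrict B) :=
      ((hηint.restrict (s := B)).add (integrable_const c)).const_mul e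
    have h := integral_mono (hfint.restrict (s := B)) hint2 hpw
    rw [integral_const_mul, integral_add hηint.restrict (integrable_const c),
      integral_const, measureReal_restrict_apply_univ, smul_eq_mul] at h
    have hηb : (∫ x in B, η x ∂α) ≤ ηsup * b := by
      have h2 := integral_mono (hηint.restrict (s := B)) (integrable_const ηsup)
        (fun x => hηsup.1 ⟨x, rfl⟩)
      rw [integral_const, measureReal_restrict_apply_univ, smul_eq_mul] at h2
      rw [show α.real B = b from rfl] at h2
      linarith [h2]
    calc I ≤ e * ((∫ x in B, η x ∂α) + b * c) := h
    _ ≤ e * (ηsup * b + c * b) := by nlinarith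
  -- lower bound: b - I ≤ 1 - e
  have hbI : b - I ≤ 1 - e := by
    have h3 : (∫ x in B, (1 - Pt t x Set.univ) ∂α) ≤ ∫ x, (1 - Pt t x Set.univ) ∂α :=
      setIntegral_le_integral ((integrable_const (1:ℝ)).sub hfint)
        (Filter.Eventually.of_forall fun x => by
          simp only [Pi.zero_apply]
          linarith [(hPt01 t x Set.univ ht).2.2])
    rw [integral_sub (integrable_const (1:ℝ)) hfint,
      integral_sub ((integrable_const (1:ℝ)).restrict (s := B)) (hfint.restrict (s := B)),
      integral_const, integral_const, measureReal_restrict_apply_univ,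
      hqsdlaw t ht Set.univ MeasurableSet.univ] at h3
    simp only [measure_univ, probReal_univ, ENNReal.toReal_one, smul_eq_mul, mul_one, one_mul] at h3
    rw [hI_def, hb_def, he_def]
    exact h3
  -- main estimate on |IA - a * b|
  have key : |IA - a * b| ≤ a * (1 - e) + (c * e * (ηsup + c)) * b := by
    have hD := abs_le.mp h1
    have hDlo := hD.1
    have hDhi := hD.2
    rw [abs_le]
    constructor
    · nlinarith [mul_nonneg (by linarith : (0:ℝ) ≤ IA / I - a + c) hI0,
        mul_le_mul_of_nonneg_left hIup hc.le,
        mul_le_mul_of_nonneg_left hbI ha]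
    · nlinarith [mul_nonneg (by linarith : (0:ℝ) ≤ c - (IA / I - a)) hI0,
        mul_le_mul_of_nonneg_left hIup hc.le,
        mul_nonneg ha (sub_nonneg.mpr hIb),
        mul_nonneg ha (by linarith : (0:ℝ) ≤ 1 - e)]
  -- conclude
  have hsplit : IA / b - a = (IA - a * b) / b := by
    rw [sub_div, mul_div_cancel_right₀ a hb.ne']
  rw [hsplit, abs_div, abs_of_pos hb, div_le_iff₀ hb]
  have hexp : C * Real.exp (-((lam0 + γ) * t)) = c * e := by
    have harg : -((lam0 + γ) * t) = -(γ * t) + -(lam0 * t) := by ring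
    rw [hc_def, he_def, mul_assoc, ← Real.exp_add, harg]
  rw [hexp]
  have hab : a / b * (1 - e + c * e) * b = a * (1 - e + c * e) := by
    field_simp
  nlinarith [key, hab, mul_nonneg (mul_nonneg ha hc.le) he.le,
    mul_nonneg (mul_nonneg (mul_nonneg ha hc.le) he.le) hb.le]
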